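/- Let U ⊆ ℝ² be open, β : U → ℝ a positive C¹ function, and γ̃ : U → M₂(ℝ) a C¹ map whose values are symmetric matrices with det γ̃(x) = 1 for all x ∈ U; set γ = βγ̃. Let u₁, u₂, u₃ be real-valued C² functions on U, set H_i := γ∇u_i, and assume det([H₁(x), H₂(x)]) ≠ 0 for all x ∈ U. Define μ₁ := det([H₃,H₂])/det([H₁,H₂]) and μ₂ := det([H₁,H₃])/det([H₁,H₂]) on U, the matrix field Z := [∇μ₁, ∇μ₂], and M := (Z [H₁,H₂]ᵀ J)^sym. Then ⟨γ̃(x), M(x)⟩ = 0 for every x ∈ U. -/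

import Mathlib

open Matrix

/-- The gradient of a real-valued function on ℝ², as a vector of partial derivatives. -/
noncomputable def grad (u : (Fin 2 → ℝ) → ℝ) (x : Fin 2 → ℝ) : Fin 2 → ℝ :=
  fun i => fderiv ℝ u x (Pi.single i 1)

/-- The 2×2 matrix with columns `a` and `b`. -/
def col2 (a b : Fin 2 → ℝ) : Matrix (Fin 2) (Fin 2) ℝ :=
  Matrix.of fun i => ![a i, b i]

/-- The rotation matrix `J = e₂⊗e₁ − e₁⊗e₂`, i.e. `Jv = (−v₂, v₁)`. -/
def J2 : Matrix (Fin 2) (Fin 2) ℝ := !![0, -1; 1, 0]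

/-- The symmetric part `(A + Aᵀ)/2` of a matrix. -/
noncomputable def symPart (A : Matrix (Fin 2) (Fin 2) ℝ) : Matrix (Fin 2) (Fin 2) ℝ :=
  (2 : ℝ)⁻¹ • (A + Aᵀ)

/-- The Frobenius inner product `⟨A,B⟩ = tr(AᵀB)`. -/
noncomputable def frob (A B : Matrix (Fin 2) (Fin 2) ℝ) : ℝ := (Aᵀ * B).trace

/-- Pointwise orthogonality constraint of Section 3.2: the normalized anisotropy `γ̃` is
Frobenius-orthogonal to the constraint matrix `M = (Z[H₁,H₂]ᵀJ)^sym` built from the internal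
current densities `Hᵢ = γ∇uᵢ` via Cramer's rule coefficients `μ₁, μ₂` and `Z = [∇μ₁, ∇μ₂]`. -/
theorem stmt3 (U : Set (Fin 2 → ℝ)) (hU : IsOpen U)
    (β : (Fin 2 → ℝ) → ℝ) (hβC : ContDiffOn ℝ 1 β U) (hβpos : ∀ x ∈ U, 0 < β x)
    (γt : (Fin 2 → ℝ) → Matrix (Fin 2) (Fin 2) ℝ)
    (hγtC : ∀ i j, ContDiffOn ℝ 1 (fun x => γt x i j) U)
    (hγtsymm : ∀ x ∈ U, (γt x).IsSymm) (hγtdet : ∀ x ∈ U, (γt x).det = 1)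
    (u₁ u₂ u₃ : (Fin 2 → ℝ) → ℝ)
    (hu₁ : ContDiffOn ℝ 2 u₁ U) (hu₂ : ContDiffOn ℝ 2 u₂ U) (hu₃ : ContDiffOn ℝ 2 u₃ U)
    (H₁ H₂ H₃ : (Fin 2 → ℝ) → Fin 2 → ℝ)
    (hH₁ : ∀ x ∈ U, H₁ x = (β x • γt x).mulVec (grad u₁ x))
    (hH₂ : ∀ x ∈ U, H₂ x = (β x • γt x).mulVec (grad u₂ x))
    (hH₃ : ∀ x ∈ U, H₃ x = (β x • γt x).mulVec (grad u₃ x))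
    (hdet : ∀ x ∈ U, (col2 (H₁ x) (H₂ x)).det ≠ 0) :
    ∀ x ∈ U,
      frob (γt x)
        (symPart
          (col2
            (grad (fun y => (col2 (H₃ y) (H₂ y)).det / (col2 (H₁ y) (H₂ y)).det) x)
            (grad (fun y => (col2 (H₁ y) (H₃ y)).det / (col2 (H₁ y) (H₂ y)).det) x)
            * (col2 (H₁ x) (H₂ x))ᵀ * J2)) = 0 := by
  intro x hx
  have hdc : ∀ a b : Fin 2 → ℝ, (col2 a b).det = a 0 * b 1 - b 0 * a 1 := by
    intro a b; simp [col2, Matrix.det_fin_two]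
  -- smoothness of gradient components
  have hgradC : ∀ (u : (Fin 2 → ℝ) → ℝ), ContDiffOn ℝ 2 u U → ∀ i : Fin 2,
      ContDiffOn ℝ 1 (fun y => grad u y i) U := by
    intro u hu i
    have h1 : ContDiffOn ℝ 1 (fun y => fderiv ℝ u y) U :=
      hu.fderiv_of_isOpen hU (by norm_num)
    exact (ContinuousLinearMap.apply ℝ ℝ
      ((Pi.single i 1 : Fin 2 → ℝ))).contDiff.comp_contDiffOn h1
  have hdg : ∀ (u : (Fin 2 → ℝ) → ℝ), ContDiffOn ℝ 2 u U → ∀ i : Fin 2,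
      DifferentiableAt ℝ (fun y => grad u y i) x := by
    intro u hu i
    exact ((hgradC u hu i).differentiableOn one_ne_zero).differentiableAt (hU.mem_nhds hx)
  -- expansion of mulVec
  have hmv : ∀ (c : ℝ) (g : Matrix (Fin 2) (Fin 2) ℝ) (v : Fin 2 → ℝ) (i : Fin 2),
      (c • g).mulVec v i = c * (g i 0 * v 0 + g i 1 * v 1) := by
    intro c g v i
    simp [Matrix.mulVec, dotProduct, Fin.sum_univ_two]
    ring
  have hH₁' : ∀ y ∈ U, ∀ i, H₁ y i
      = β y * (γt y i 0 * grad u₁ y 0 + γt y i 1 * grad u₁ y 1) := by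
    intro y hy i; rw [hH₁ y hy]; exact hmv _ _ _ _
  have hH₂' : ∀ y ∈ U, ∀ i, H₂ y i
      = β y * (γt y i 0 * grad u₂ y 0 + γt y i 1 * grad u₂ y 1) := by
    intro y hy i; rw [hH₂ y hy]; exact hmv _ _ _ _
  have hH₃' : ∀ y ∈ U, ∀ i, H₃ y i
      = β y * (γt y i 0 * grad u₃ y 0 + γt y i 1 * grad u₃ y 1) := by
    intro y hy i; rw [hH₃ y hy]; exact hmv _ _ _ _
  -- the Cramer coefficients
  set m₁ : (Fin 2 → ℝ) → ℝ :=
    fun y => (col2 (H₃ y) (H₂ y)).det / (col2 (H₁ y) (H₂ y)).det with hm₁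
  set m₂ : (Fin 2 → ℝ) → ℝ :=
    fun y => (col2 (H₁ y) (H₃ y)).det / (col2 (H₁ y) (H₂ y)).det with hm₂
  -- smooth surrogates for m₁ m₂
  set F : ((Fin 2 → ℝ) → ℝ) → Fin 2 → (Fin 2 → ℝ) → ℝ :=
    fun u i y => β y * (γt y i 0 * grad u y 0 + γt y i 1 * grad u y 1) with hF
  have hFd : ∀ (u : (Fin 2 → ℝ) → ℝ), ContDiffOn ℝ 2 u U → ∀ i : Fin 2,
      DifferentiableAt ℝ (F u i) x := by
    intro u hu i
    have : ContDiffOn ℝ 1 (F u i) U :=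
      hβC.mul (((hγtC i 0).mul (hgradC u hu 0)).add ((hγtC i 1).mul (hgradC u hu 1)))
    exact (this.differentiableOn one_ne_zero).differentiableAt (hU.mem_nhds hx)
  set n₁ : (Fin 2 → ℝ) → ℝ := fun y =>
    (F u₃ 0 y * F u₂ 1 y - F u₂ 0 y * F u₃ 1 y)
      / (F u₁ 0 y * F u₂ 1 y - F u₂ 0 y * F u₁ 1 y) with hn₁
  set n₂ : (Fin 2 → ℝ) → ℝ := fun y =>
    (F u₁ 0 y * F u₃ 1 y - F u₃ 0 y * F u₁ 1 y)
      / (F u₁ 0 y * F u₂ 1 y - F u₂ 0 y * F u₁ 1 y) with hn₂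
  have hden : ∀ y ∈ U, F u₁ 0 y * F u₂ 1 y - F u₂ 0 y * F u₁ 1 y
      = (col2 (H₁ y) (H₂ y)).det := by
    intro y hy
    rw [hdc, hH₁' y hy 0, hH₁' y hy 1, hH₂' y hy 0, hH₂' y hy 1]
  have hm₁n₁ : ∀ y ∈ U, m₁ y = n₁ y := by
    intro y hy
    rw [hm₁, hn₁]
    simp only
    rw [hden y hy, hdc, hH₃' y hy 0, hH₃' y hy 1, hH₂' y hy 0, hH₂' y hy 1]
  have hm₂n₂ : ∀ y ∈ U, m₂ y = n₂ y := by
    intro y hy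
    rw [hm₂, hn₂]
    simp only
    rw [hden y hy, hdc, hH₃' y hy 0, hH₃' y hy 1, hH₁' y hy 0, hH₁' y hy 1]
  have hdenx : F u₁ 0 x * F u₂ 1 x - F u₂ 0 x * F u₁ 1 x ≠ 0 := by
    rw [hden x hx]; exact hdet x hx
  have hdn₁ : DifferentiableAt ℝ n₁ x := by
    rw [hn₁]
    have hnum : DifferentiableAt ℝ (fun y => F u₃ 0 y * F u₂ 1 y - F u₂ 0 y * F u₃ 1 y) x :=
      ((hFd u₃ hu₃ 0).mul (hFd u₂ hu₂ 1)).sub ((hFd u₂ hu₂ 0).mul (hFd u₃ hu₃ 1))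
    have hde : DifferentiableAt ℝ (fun y => F u₁ 0 y * F u₂ 1 y - F u₂ 0 y * F u₁ 1 y) x :=
      ((hFd u₁ hu₁ 0).mul (hFd u₂ hu₂ 1)).sub ((hFd u₂ hu₂ 0).mul (hFd u₁ hu₁ 1))
    simp only [div_eq_mul_inv]
    exact hnum.mul (hde.inv hdenx)
  have hdn₂ : DifferentiableAt ℝ n₂ x := by
    rw [hn₂]
    have hnum : DifferentiableAt ℝ (fun y => F u₁ 0 y * F u₃ 1 y - F u₃ 0 y * F u₁ 1 y) x :=
      ((hFd u₁ hu₁ 0).mul (hFd u₃ hu₃ 1)).sub ((hFd u₃ hu₃ 0).mul (hFd u₁ hu₁ 1))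
    have hde : DifferentiableAt ℝ (fun y => F u₁ 0 y * F u₂ 1 y - F u₂ 0 y * F u₁ 1 y) x :=
      ((hFd u₁ hu₁ 0).mul (hFd u₂ hu₂ 1)).sub ((hFd u₂ hu₂ 0).mul (hFd u₁ hu₁ 1))
    simp only [div_eq_mul_inv]
    exact hnum.mul (hde.inv hdenx)
  have hevU : ∀ᶠ y in nhds x, y ∈ U := hU.eventually_mem hx
  have hev₁ : m₁ =ᶠ[nhds x] n₁ := by
    filter_upwards [hevU] with y hy; exact hm₁n₁ y hy
  have hev₂ : m₂ =ᶠ[nhds x] n₂ := by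
    filter_upwards [hevU] with y hy; exact hm₂n₂ y hy
  have hdm₁ : DifferentiableAt ℝ m₁ x := hdn₁.congr_of_eventuallyEq hev₁
  have hdm₂ : DifferentiableAt ℝ m₂ x := hdn₂.congr_of_eventuallyEq hev₂
  -- Cramer's rule : grad u₃ = m₁ grad u₁ + m₂ grad u₂ on U
  have hcramer : ∀ y ∈ U, ∀ i, grad u₃ y i = m₁ y * grad u₁ y i + m₂ y * grad u₂ y i := by
    intro y hy
    have hD := hdet y hy
    have hH3 : H₃ y = m₁ y • H₁ y + m₂ y • H₂ y := by
      funext i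
      simp only [Pi.add_apply, Pi.smul_apply, smul_eq_mul, hm₁, hm₂]
      rw [div_mul_eq_mul_div, div_mul_eq_mul_div, ← add_div, eq_div_iff hD]
      rw [hdc, hdc, hdc] at *
      fin_cases i <;> simp only [Fin.mk_zero, Fin.mk_one, Fin.isValue] <;> ring
    have hA : IsUnit (β y • γt y).det := by
      have h2 : (β y • γt y).det = (β y) ^ 2 := by
        rw [Matrix.det_smul, hγtdet y hy]; simp
      rw [h2]
      exact (pow_ne_zero 2 (hβpos y hy).ne').isUnit
    have hback : ∀ u : (Fin 2 → ℝ) → ℝ,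
        ((β y • γt y)⁻¹).mulVec ((β y • γt y).mulVec (grad u y)) = grad u y := by
      intro u
      rw [Matrix.mulVec_mulVec, Matrix.nonsing_inv_mul _ hA, Matrix.one_mulVec]
    have h3 : grad u₃ y = m₁ y • grad u₁ y + m₂ y • grad u₂ y := by
      have := hback u₃
      rw [← hH₃ y hy, hH3] at this
      rw [← this, Matrix.mulVec_add, Matrix.mulVec_smul, Matrix.mulVec_smul,
        hH₁ y hy, hH₂ y hy, hback u₁, hback u₂]
    intro i
    rw [h3]
    simp [smul_eq_mul]
  -- second derivative symmetry
  have hsymm₂ : ∀ (u : (Fin 2 → ℝ) → ℝ), ContDiffOn ℝ 2 u U →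
      fderiv ℝ (fun y => grad u y 0) x (Pi.single 1 1)
        = fderiv ℝ (fun y => grad u y 1) x (Pi.single 0 1) := by
    intro u hu
    have hca : ContDiffAt ℝ 2 u x := hu.contDiffAt (hU.mem_nhds hx)
    have hd : DifferentiableAt ℝ (fderiv ℝ u) x :=
      (hca.fderiv_right (m := 1) (by norm_num)).differentiableAt one_ne_zero
    have hflip : ∀ (v w : Fin 2 → ℝ),
        fderiv ℝ (fun y => fderiv ℝ u y v) x w = fderiv ℝ (fderiv ℝ u) x w v := by
      intro v w
      rw [fderiv_clm_apply hd (differentiableAt_const v)]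
      simp
    have hs := hca.isSymmSndFDerivAt (by simp) (Pi.single 1 1) (Pi.single 0 1)
    show fderiv ℝ (fun y => fderiv ℝ u y (Pi.single 0 1)) x (Pi.single 1 1)
        = fderiv ℝ (fun y => fderiv ℝ u y (Pi.single 1 1)) x (Pi.single 0 1)
    rw [hflip, hflip, hs]
  -- fderiv of both sides of Cramer identity
  have hev : ∀ i : Fin 2, fderiv ℝ (fun y => grad u₃ y i) x
      = fderiv ℝ (fun y => m₁ y * grad u₁ y i + m₂ y * grad u₂ y i) x := by
    intro i
    apply Filter.EventuallyEq.fderiv_eq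
    filter_upwards [hevU] with y hy
    exact hcramer y hy i
  have hR : ∀ (i j : Fin 2),
      fderiv ℝ (fun y => m₁ y * grad u₁ y i + m₂ y * grad u₂ y i) x (Pi.single j 1)
        = fderiv ℝ m₁ x (Pi.single j 1) * grad u₁ x i
          + m₁ x * fderiv ℝ (fun y => grad u₁ y i) x (Pi.single j 1)
          + (fderiv ℝ m₂ x (Pi.single j 1) * grad u₂ x i
          + m₂ x * fderiv ℝ (fun y => grad u₂ y i) x (Pi.single j 1)) := by
    intro i j
    rw [fderiv_fun_add (hdm₁.fun_mul (hdg u₁ hu₁ i)) (hdm₂.fun_mul (hdg u₂ hu₂ i)),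
      fderiv_fun_mul hdm₁ (hdg u₁ hu₁ i), fderiv_fun_mul hdm₂ (hdg u₂ hu₂ i)]
    simp [smul_eq_mul]
    ring
  have E0 : fderiv ℝ (fun y => grad u₃ y 0) x (Pi.single 1 1)
      = fderiv ℝ m₁ x (Pi.single 1 1) * grad u₁ x 0
        + m₁ x * fderiv ℝ (fun y => grad u₁ y 0) x (Pi.single 1 1)
        + (fderiv ℝ m₂ x (Pi.single 1 1) * grad u₂ x 0
        + m₂ x * fderiv ℝ (fun y => grad u₂ y 0) x (Pi.single 1 1)) := by
    rw [hev 0]; exact hR 0 1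
  have E1 : fderiv ℝ (fun y => grad u₃ y 1) x (Pi.single 0 1)
      = fderiv ℝ m₁ x (Pi.single 0 1) * grad u₁ x 1
        + m₁ x * fderiv ℝ (fun y => grad u₁ y 1) x (Pi.single 0 1)
        + (fderiv ℝ m₂ x (Pi.single 0 1) * grad u₂ x 1
        + m₂ x * fderiv ℝ (fun y => grad u₂ y 1) x (Pi.single 0 1)) := by
    rw [hev 1]; exact hR 1 0
  rw [hsymm₂ u₁ hu₁, hsymm₂ u₂ hu₂, hsymm₂ u₃ hu₃] at E0
  have hstar : fderiv ℝ m₁ x (Pi.single 1 1) * grad u₁ x 0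
        + fderiv ℝ m₂ x (Pi.single 1 1) * grad u₂ x 0
      = fderiv ℝ m₁ x (Pi.single 0 1) * grad u₁ x 1
        + fderiv ℝ m₂ x (Pi.single 0 1) * grad u₂ x 1 := by
    rw [E1] at E0
    linarith [E0]
  -- final algebraic step
  have hg : γt x 1 0 = γt x 0 1 := (hγtsymm x hx).apply 0 1
  have h10 := hH₁' x hx 0
  have h11 := hH₁' x hx 1
  have h20 := hH₂' x hx 0
  have h21 := hH₂' x hx 1
  simp only [frob, symPart, col2, J2, grad, Matrix.trace, Matrix.mul_apply,
    Matrix.transpose_apply, Fin.sum_univ_two, Matrix.of_apply, Matrix.cons_val',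
    Matrix.cons_val_zero, Matrix.cons_val_one, Matrix.head_cons, Matrix.head_fin_const,
    Matrix.smul_apply, Matrix.add_apply, smul_eq_mul, Matrix.diag_apply,
    Matrix.cons_val_fin_one, Matrix.empty_val']
  rw [h10, h11, h20, h21, hg]
  linear_combination (-(β x) * (γt x 0 0 * γt x 1 1 - γt x 0 1 * γt x 0 1)) * hstar
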